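/- The structure group of a non-degenerate symmetric set-theoretical solution is residually finite, and hence Hopfian. -/

import Mathlib

/-- The map `S(x,y) = (g_x(y), f_y(x))` of a set-theoretical solution. -/
def ybS {X : Type*} (g f : X → Equiv.Perm X) : X × X → X × X :=
  fun p => (g p.1 p.2, f p.2 p.1)

/-- `S` acting on the first two components of `X³`. -/
def ybS12 {X : Type*} (g f : X → Equiv.Perm X) : X × X × X → X × X × X :=
  fun t => ((ybS g f (t.1, t.2.1)).1, (ybS g f (t.1, t.2.1)).2, t.2.2)

/-- `S` acting on the last two components of `X³`. -/
def ybS23 {X : Type*} (g f : X → Equiv.Perm X) : X × X × X → X × X × X :=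
  fun t => (t.1, ybS g f (t.2.1, t.2.2))

/-- Relators `x·y·(g_x(y)·f_y(x))⁻¹` of the structure group `G(X,S)`. -/
def structureGroupRels {X : Type*} (g f : X → Equiv.Perm X) : Set (FreeGroup X) :=
  {r | ∃ x y : X, r = FreeGroup.of x * FreeGroup.of y *
    (FreeGroup.of (g x y) * FreeGroup.of (f y x))⁻¹}

set_option linter.unusedSectionVars false
set_option linter.unusedVariables false

namespace YBAux

variable {X : Type*} [DecidableEq X]

/-- Action of permutations on functions by precomposing with the inverse. -/
def act (X : Type*) (M : Type*) [CommGroup M] :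
    Equiv.Perm X →* MulAut (X → M) where
  toFun σ := MulEquiv.arrowCongr σ (MulEquiv.refl M)
  map_one' := by ext v x; simp [MulEquiv.arrowCongr]; rfl
  map_mul' σ τ := by ext v x; simp [MulEquiv.arrowCongr, Equiv.Perm.mul_def]

@[simp] lemma act_apply {M : Type*} [CommGroup M] (σ : Equiv.Perm X) (v : X → M) (x : X) :
    act X M σ v x = v (σ.symm x) := rfl

def δ (x : X) : X → Multiplicative ℤ := Pi.mulSingle x (Multiplicative.ofAdd 1)

lemma act_δ (σ : Equiv.Perm X) (x : X) : act X (Multiplicative ℤ) σ (δ x) = δ (σ x) := by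
  funext y
  simp [δ, Pi.mulSingle_apply, Equiv.symm_apply_eq]

variable (g f : X → Equiv.Perm X)

/-- The target group `ℤ^X ⋊ Perm X`. -/
abbrev Hgrp (X : Type*) [DecidableEq X] := (X → Multiplicative ℤ) ⋊[act X (Multiplicative ℤ)] Equiv.Perm X

/-- The image of a generator. -/
def Fh (x : X) : Hgrp X := ⟨δ x, g x⟩

lemma relH (h1 : ∀ x y : X, g (g x y) (f y x) = x)
    (h2 : ∀ x y : X, g x * g y = g (g x y) * g (f y x))
    (x y : X) : Fh g x * Fh g y = Fh g (g x y) * Fh g (f y x) := by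
  refine SemidirectProduct.ext ?_ (h2 x y)
  show δ x * act X (Multiplicative ℤ) (g x) (δ y)
      = δ (g x y) * act X (Multiplicative ℤ) (g (g x y)) (δ (f y x))
  rw [act_δ, act_δ, h1, mul_comm]

lemma rels_lift (h1 : ∀ x y : X, g (g x y) (f y x) = x)
    (h2 : ∀ x y : X, g x * g y = g (g x y) * g (f y x)) :
    ∀ r ∈ structureGroupRels g f, FreeGroup.lift (Fh g) r = 1 := by
  rintro r ⟨x, y, rfl⟩
  simp only [map_mul, map_inv, FreeGroup.lift_apply_of]
  rw [relH g f h1 h2, mul_inv_cancel]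

/-- Product of the images of a word in `Hgrp`. -/
def W (l : List X) : Hgrp X := (l.map (Fh g)).prod

@[simp] lemma W_nil : W g ([] : List X) = 1 := rfl

lemma W_cons (x : X) (l : List X) : W g (x :: l) = Fh g x * W g l := by
  simp [W]

/-- The additive vector of a word. -/
def vA (l : List X) : X → ℤ := fun y => Multiplicative.toAdd ((W g l).left y)

lemma vA_nil (y : X) : vA g ([] : List X) y = 0 := rfl

lemma vA_cons (x : X) (l : List X) (y : X) :
    vA g (x :: l) y = (if y = x then 1 else 0) + vA g l ((g x)⁻¹ y) := by
  have : (W g (x :: l)).left y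
      = δ x y * act X (Multiplicative ℤ) (g x) ((W g l).left) y := by
    rw [W_cons]; rfl
  unfold vA
  rw [this]
  have hδ : Multiplicative.toAdd (δ x y) = (if y = x then (1:ℤ) else 0) := by
    by_cases h : y = x <;> simp [δ, Pi.mulSingle_apply, h]
  rw [toAdd_mul, hδ]
  rfl

lemma vA_nonneg (l : List X) : ∀ y : X, 0 ≤ vA g l y := by
  induction l with
  | nil => intro y; simp [vA_nil]
  | cons x l ih =>
    intro y
    rw [vA_cons]
    have := ih ((g x)⁻¹ y)
    split <;> omega

lemma vA_cons_self (x : X) (l : List X) : vA g (x :: l) x ≠ 0 := by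
  rw [vA_cons]
  have := vA_nonneg g l ((g x)⁻¹ x)
  rw [if_pos rfl]
  omega


/-- Generator in the presented group. -/
def pOf (x : X) : PresentedGroup (structureGroupRels g f) := PresentedGroup.of x

/-- Product of a word in the presented group. -/
def P (l : List X) : PresentedGroup (structureGroupRels g f) := (l.map (pOf g f)).prod

@[simp] lemma P_nil : P g f [] = 1 := rfl

lemma P_cons (x : X) (l : List X) : P g f (x :: l) = pOf g f x * P g f l := by
  simp [P]

lemma P_append (l1 l2 : List X) : P g f (l1 ++ l2) = P g f l1 * P g f l2 := by
  simp [P]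

lemma relG (x y : X) : pOf g f x * pOf g f y = pOf g f (g x y) * pOf g f (f y x) := by
  have hr : (FreeGroup.of x * FreeGroup.of y *
      (FreeGroup.of (g x y) * FreeGroup.of (f y x))⁻¹) ∈
      Subgroup.normalClosure (structureGroupRels g f) :=
    Subgroup.subset_normalClosure ⟨x, y, rfl⟩
  have h0 : PresentedGroup.mk (structureGroupRels g f) (FreeGroup.of x * FreeGroup.of y *
      (FreeGroup.of (g x y) * FreeGroup.of (f y x))⁻¹) = 1 :=
    (QuotientGroup.eq_one_iff _).2 hr
  rw [map_mul, map_inv, map_mul, map_mul, mul_inv_eq_one] at h0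
  exact h0

lemma claim (h1 : ∀ x y : X, g (g x y) (f y x) = x)
    (h2 : ∀ x y : X, g x * g y = g (g x y) * g (f y x)) :
    ∀ (l : List X) (y : X), vA g l y ≠ 0 →
    ∃ c : List X, l.length = c.length + 1 ∧ P g f l = P g f (y :: c) ∧ W g l = W g (y :: c) := by
  intro l
  induction l with
  | nil => intro y hy; exact absurd (vA_nil g y) hy
  | cons x l ih =>
    intro y hy
    by_cases hxy : y = x
    · subst hxy; exact ⟨l, rfl, rfl, rfl⟩
    · rw [vA_cons, if_neg hxy, zero_add] at hy
      obtain ⟨c', hlen, hP, hW⟩ := ih ((g x)⁻¹ y) hy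
      have hgy : g x ((g x)⁻¹ y) = y := Equiv.apply_symm_apply (g x) y
      refine ⟨f ((g x)⁻¹ y) x :: c', by simp [hlen], ?_, ?_⟩
      · rw [P_cons, hP, P_cons, ← mul_assoc]
        show pOf g f x * pOf g f ((g x)⁻¹ y) * P g f c' = _
        rw [relG g f x ((g x)⁻¹ y), hgy, mul_assoc, ← P_cons, ← P_cons]
      · rw [W_cons, hW, W_cons, ← mul_assoc, relH g f h1 h2 x ((g x)⁻¹ y), hgy,
          mul_assoc, ← W_cons, ← W_cons]

lemma main (h1 : ∀ x y : X, g (g x y) (f y x) = x)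
    (h2 : ∀ x y : X, g x * g y = g (g x y) * g (f y x)) :
    ∀ (n : ℕ) (a b : List X), a.length ≤ n → vA g a = vA g b → P g f a = P g f b := by
  intro n
  induction n with
  | zero =>
    intro a b ha hv
    have hanil : a = [] := List.eq_nil_of_length_eq_zero (Nat.le_zero.mp ha)
    subst hanil
    cases b with
    | nil => rfl
    | cons y b' =>
      exfalso
      apply vA_cons_self g y b'
      have h9 := congrFun hv y
      rw [vA_nil] at h9
      exact h9.symm
  | succ n ih =>
    intro a b ha hv
    cases b with
    | nil =>
      cases a with
      | nil => rfl
      | cons x a' =>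
        exfalso
        apply vA_cons_self g x a'
        have h9 := congrFun hv x
        rw [vA_nil] at h9
        exact h9
    | cons y b' =>
      have hy : vA g a y ≠ 0 := by rw [hv]; exact vA_cons_self g y b'
      obtain ⟨c, hlen, hP, hW⟩ := claim g f h1 h2 a y hy
      have hvc : vA g c = vA g b' := by
        funext w
        have h3 : vA g (y :: c) = vA g (y :: b') := by
          have h3' : vA g a = vA g (y :: c) := by unfold vA; rw [hW]
          rw [← h3', hv]
        have h4 := congrFun h3 (g y w)
        rw [vA_cons, vA_cons, show (g y)⁻¹ (g y w) = w from Equiv.symm_apply_apply (g y) w] at h4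
        omega
      have hc : c.length ≤ n := by omega
      rw [hP, P_cons, ih c b' hc hvc, ← P_cons]

lemma negPull : ∀ (A : List X) (x : X), ∃ (A' : List X) (z : X),
    (pOf g f x)⁻¹ * P g f A = P g f A' * (pOf g f z)⁻¹ := by
  intro A
  induction A with
  | nil => intro x; exact ⟨[], x, by simp⟩
  | cons a A ih =>
    intro x
    obtain ⟨A', z, hA⟩ := ih (f ((g x)⁻¹ a) x)
    refine ⟨(g x)⁻¹ a :: A', z, ?_⟩
    have hrel := relG g f x ((g x)⁻¹ a)
    rw [show g x ((g x)⁻¹ a) = a from Equiv.apply_symm_apply (g x) a] at hrel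
    have h5 : (pOf g f x)⁻¹ * pOf g f a
        = pOf g f ((g x)⁻¹ a) * (pOf g f (f ((g x)⁻¹ a) x))⁻¹ := by
      rw [eq_mul_inv_iff_mul_eq, mul_assoc, inv_mul_eq_iff_eq_mul]
      exact hrel.symm
    rw [P_cons, P_cons, ← mul_assoc, h5, mul_assoc, hA, ← mul_assoc]

lemma negPullList : ∀ (B A : List X), ∃ A' B' : List X,
    (P g f B)⁻¹ * P g f A = P g f A' * (P g f B')⁻¹ := by
  intro B
  induction B with
  | nil => intro A; exact ⟨A, [], by simp⟩
  | cons b B ih =>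
    intro A
    obtain ⟨A1, z, h5⟩ := negPull g f A b
    obtain ⟨A', B', h6⟩ := ih A1
    refine ⟨A', z :: B', ?_⟩
    calc (P g f (b::B))⁻¹ * P g f A
        = (P g f B)⁻¹ * ((pOf g f b)⁻¹ * P g f A) := by
          rw [P_cons, mul_inv_rev, mul_assoc]
      _ = (P g f B)⁻¹ * (P g f A1 * (pOf g f z)⁻¹) := by rw [h5]
      _ = ((P g f B)⁻¹ * P g f A1) * (pOf g f z)⁻¹ := by rw [mul_assoc]
      _ = (P g f A' * (P g f B')⁻¹) * (pOf g f z)⁻¹ := by rw [h6]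
      _ = P g f A' * (P g f (z::B'))⁻¹ := by rw [P_cons, mul_inv_rev, mul_assoc]

lemma decomp (u : PresentedGroup (structureGroupRels g f)) :
    ∃ A B : List X, u = P g f A * (P g f B)⁻¹ := by
  refine PresentedGroup.induction_on
    (C := fun u => ∃ A B : List X, u = P g f A * (P g f B)⁻¹) u ?_
  intro z
  refine FreeGroup.induction_on
    (C := fun w => ∃ A B : List X,
      PresentedGroup.mk (structureGroupRels g f) w = P g f A * (P g f B)⁻¹) z ?_ ?_ ?_ ?_
  · exact ⟨[], [], by simp⟩
  · intro x
    refine ⟨[x], [], ?_⟩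
    show pOf g f x = _
    simp [P, pOf]
  · intro x _
    refine ⟨[], [x], ?_⟩
    rw [map_inv]
    show (pOf g f x : PresentedGroup (structureGroupRels g f))⁻¹ = _
    simp [P, pOf]
  · rintro w1 w2 ⟨A1, B1, hA⟩ ⟨A2, B2, hB⟩
    obtain ⟨A', B', h7⟩ := negPullList g f B1 A2
    refine ⟨A1 ++ A', B2 ++ B', ?_⟩
    rw [map_mul, hA, hB, P_append, P_append]
    calc (P g f A1 * (P g f B1)⁻¹) * (P g f A2 * (P g f B2)⁻¹)
        = P g f A1 * (((P g f B1)⁻¹ * P g f A2) * (P g f B2)⁻¹) := by group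
      _ = P g f A1 * ((P g f A' * (P g f B')⁻¹) * (P g f B2)⁻¹) := by rw [h7]
      _ = (P g f A1 * P g f A') * (P g f B2 * P g f B')⁻¹ := by group

lemma toGroup_injective (h1 : ∀ x y : X, g (g x y) (f y x) = x)
    (h2 : ∀ x y : X, g x * g y = g (g x y) * g (f y x)) :
    Function.Injective (PresentedGroup.toGroup (rels_lift g f h1 h2)) := by
  rw [injective_iff_map_eq_one]
  intro u hu
  obtain ⟨A, B, rfl⟩ := decomp g f u
  have hPhiP : ∀ L : List X,
      PresentedGroup.toGroup (rels_lift g f h1 h2) (P g f L) = W g L := by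
    intro L
    induction L with
    | nil => simp [W]
    | cons x L ihL =>
      rw [P_cons, W_cons, map_mul, ihL]
      congr 1
      exact PresentedGroup.toGroup.of _
  rw [map_mul, map_inv, hPhiP, hPhiP, mul_inv_eq_one] at hu
  have hv : vA g A = vA g B := by funext y; unfold vA; rw [hu]
  rw [main g f h1 h2 A.length A B le_rfl hv, mul_inv_cancel]


section Finiteness

/-- Reduction `ℤ^X → (ℤ/N)^X` as a monoid hom on multiplicative types. -/
def red (X : Type*) (N : ℕ) : (X → Multiplicative ℤ) →* (X → Multiplicative (ZMod N)) where
  toFun v := fun x => Multiplicative.ofAdd ((Multiplicative.toAdd (v x) : ℤ) : ZMod N)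
  map_one' := by funext x; simp
  map_mul' v w := by
    funext x
    show Multiplicative.ofAdd ((Multiplicative.toAdd (v x * w x) : ℤ) : ZMod N) = _
    rw [toAdd_mul, Int.cast_add, ofAdd_add]
    rfl

/-- The reduction `ℤ^X ⋊ Perm X → (ℤ/N)^X ⋊ Perm X`. -/
def Θ (X : Type*) [DecidableEq X] (N : ℕ) :
    Hgrp X →* (X → Multiplicative (ZMod N)) ⋊[act X (Multiplicative (ZMod N))] Equiv.Perm X :=
  SemidirectProduct.map (red X N) (MonoidHom.id _)
    (fun σ => MonoidHom.ext fun v => funext fun x => rfl)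

lemma sdp_finite {N G : Type*} [Group N] [Group G] {φ : G →* MulAut N}
    [Finite N] [Finite G] : Finite (N ⋊[φ] G) :=
  Finite.of_injective (fun h => ((h.left, h.right) : N × G))
    (fun a b hab => SemidirectProduct.ext (congrArg Prod.fst hab) (congrArg Prod.snd hab))

lemma sep_of_hom {G : Type*} [Group G] {a : G} {K : Type*} [Group K] [Finite K]
    (ψ : G →* K) (h : ψ a ≠ 1) :
    ∃ (Q : Type) (_ : Group Q) (_ : Finite Q) (φ : G →* Q), φ a ≠ 1 := by
  obtain ⟨Q, _, _, ⟨e⟩⟩ := Finite.exists_type_univ_nonempty_mulEquiv.{_, 0} K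
  refine ⟨Q, inferInstance, inferInstance, e.toMonoidHom.comp ψ, fun hc => h ?_⟩
  apply e.injective
  rw [map_one]
  exact hc

lemma homFinite {X : Type*} [Finite X] {rels : Set (FreeGroup X)}
    (Q : Type*) [Group Q] [Finite Q] : Finite (PresentedGroup rels →* Q) := by
  have hinj : Function.Injective
      (fun (h : PresentedGroup rels →* Q) => fun x : X => h (PresentedGroup.of x)) := by
    intro h1 h2 hh
    exact PresentedGroup.ext fun x => congrFun hh x
  exact Finite.of_injective _ hinj

lemma hopf {G : Type*} [Group G]
    (Qsep : ∀ a : G, a ≠ 1 → ∃ (Q : Type) (_ : Group Q) (_ : Finite Q) (ψ : G →* Q), ψ a ≠ 1)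
    (homfin : ∀ (Q : Type) [Group Q] [Finite Q], Finite (G →* Q))
    (φ : G →* G) (hφ : Function.Surjective φ) : Function.Injective φ := by
  rw [injective_iff_map_eq_one]
  by_contra hcon
  push_neg at hcon
  obtain ⟨a, ha1, hane⟩ := hcon
  obtain ⟨Q, _, _, ψ, hψ⟩ := Qsep a hane
  let A : ℕ → G := fun n => Nat.rec a (fun _ x => Function.surjInv hφ x) n
  have hA : ∀ n, φ (A (n + 1)) = A n := fun n => Function.surjInv_eq hφ _
  let Ψ : ℕ → (G →* Q) := fun n => Nat.rec ψ (fun _ h => h.comp φ) n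
  have hΨ : ∀ n, Ψ (n + 1) = (Ψ n).comp φ := fun n => rfl
  have key : ∀ n k, Ψ (n + k) (A n) = Ψ k a := by
    intro n
    induction n with
    | zero => intro k; rw [Nat.zero_add]; rfl
    | succ n ihn =>
      intro k
      have hnk : (n + 1) + k = (n + k) + 1 := by omega
      rw [hnk, hΨ]
      show Ψ (n + k) (φ (A (n + 1))) = _
      rw [hA, ihn]
  have hne : ∀ n, Ψ n (A n) ≠ 1 := by
    intro n
    have h0 : Ψ n (A n) = ψ a := key n 0
    rw [h0]; exact hψ
  have hz : ∀ n k, Ψ (n + (k + 1)) (A n) = 1 := by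
    intro n k
    rw [key n (k + 1), hΨ]
    show Ψ k (φ a) = 1
    rw [ha1, map_one]
  haveI := homfin Q
  obtain ⟨m, n, hmn, heq⟩ := Finite.exists_ne_map_eq_of_infinite Ψ
  rcases Nat.lt_or_ge m n with h | h
  · obtain ⟨k, rfl⟩ : ∃ k, n = m + (k + 1) := ⟨n - m - 1, by omega⟩
    exact hne m (by rw [heq]; exact hz m k)
  · have h' : n < m := lt_of_le_of_ne h (Ne.symm hmn)
    obtain ⟨k, rfl⟩ : ∃ k, m = n + (k + 1) := ⟨m - n - 1, by omega⟩
    exact hne n (by rw [← heq]; exact hz n k)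

end Finiteness

end YBAux

/-- The structure group of a non-degenerate symmetric (involutive
and braided) set-theoretical solution on a finite set is residually finite, and
hence Hopfian. -/
theorem stmt_0 {X : Type*} [Fintype X] (g f : X → Equiv.Perm X)
    (invol : ∀ p : X × X, ybS g f (ybS g f p) = p)
    (braid : ybS12 g f ∘ ybS23 g f ∘ ybS12 g f = ybS23 g f ∘ ybS12 g f ∘ ybS23 g f) :
    (∀ a : PresentedGroup (structureGroupRels g f), a ≠ 1 →
      ∃ (Q : Type) (_ : Group Q) (_ : Finite Q)
        (φ : PresentedGroup (structureGroupRels g f) →* Q), φ a ≠ 1) ∧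
    (∀ φ : PresentedGroup (structureGroupRels g f) →*
        PresentedGroup (structureGroupRels g f),
      Function.Surjective φ → Function.Injective φ) := by
  letI := Classical.decEq X
  have h1 : ∀ x y : X, g (g x y) (f y x) = x := fun x y => congrArg Prod.fst (invol (x, y))
  have h2 : ∀ x y : X, g x * g y = g (g x y) * g (f y x) := by
    intro x y
    refine Equiv.ext fun z => ?_
    have hb := congrArg (fun t : X × X × X => t.1) (congrFun braid (x, y, z))
    -- hb : g (g x y) (g (f y x) z) = g x (g y z)
    simpa [Equiv.Perm.mul_apply, ybS12, ybS23, ybS] using hb.symm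
  set Φ := PresentedGroup.toGroup (YBAux.rels_lift g f h1 h2) with hΦ
  have hinj : Function.Injective Φ := YBAux.toGroup_injective g f h1 h2
  have resfin : ∀ a : PresentedGroup (structureGroupRels g f), a ≠ 1 →
      ∃ (Q : Type) (_ : Group Q) (_ : Finite Q)
        (φ : PresentedGroup (structureGroupRels g f) →* Q), φ a ≠ 1 := by
    intro a ha
    have hΦa : Φ a ≠ 1 := fun h => ha (hinj (by rw [h, map_one]))
    by_cases hσ : (Φ a).right = 1
    · have hv : (Φ a).left ≠ 1 := fun hl => hΦa (SemidirectProduct.ext hl hσ)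
      obtain ⟨x, hx⟩ : ∃ x, (Φ a).left x ≠ 1 := by
        by_contra hc
        push_neg at hc
        exact hv (funext fun x => hc x)
      set c : ℤ := Multiplicative.toAdd ((Φ a).left x) with hc
      have hcne : c ≠ 0 := fun h0 => hx (by
        have : Multiplicative.ofAdd c = (Φ a).left x := rfl
        rw [← this, h0]; rfl)
      set N : ℕ := c.natAbs + 1 with hN
      haveI : Finite ((X → Multiplicative (ZMod N))
          ⋊[YBAux.act X (Multiplicative (ZMod N))] Equiv.Perm X) := YBAux.sdp_finite
      refine YBAux.sep_of_hom ((YBAux.Θ X N).comp Φ) fun hone => ?_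
      have hleft : YBAux.red X N ((Φ a).left) = 1 := by
        have := congrArg SemidirectProduct.left hone
        exact this
      have hcast : ((c : ℤ) : ZMod N) = 0 := by
        have := congrFun hleft x
        have h3 : Multiplicative.ofAdd ((c : ℤ) : ZMod N) = 1 := this
        simpa using h3
      rw [ZMod.intCast_zmod_eq_zero_iff_dvd] at hcast
      have hdvd : N ∣ c.natAbs := by
        rwa [Int.natCast_dvd] at hcast
      have := Nat.le_of_dvd (Int.natAbs_pos.mpr hcne) hdvd
      omega
    · haveI : Finite (Equiv.Perm X) := inferInstance
      refine YBAux.sep_of_hom (SemidirectProduct.rightHom.comp Φ) ?_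
      simpa using hσ
  refine ⟨resfin, fun φ hs => YBAux.hopf resfin (fun Q _ _ => YBAux.homFinite Q) φ hs⟩
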